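/- arXiv:1510.06535 — 2 statements merged into one kernel-verified Lean document; each statement's English description precedes it below -/
import Mathlib

section
/- Consider finite rooted trees where each node carries a natural-number rank, satisfying the invariant: every node of rank r has children of ranks r-1 and r-2 whenever r ≥ 2, and a child of rank 0 whenever r = 1. Then a node of rank r has at least F_{r+3} - 1 descendants (counting itself). -/
/-- Balance lemma for multi-root hollow heaps (Lemma 2.2). In a finite forest
(given by a `parent` function, with no cycles) whose nodes carry ranks such that
every node of rank `r ≥ 2` has children of ranks `r-1` and `r-2`, and every node
of rank `1` has a child of rank `0`, every node of rank `r` has at least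
`F_{r+3} - 1` descendants (itself included). -/
theorem rank_invariant_descendants {V : Type*} [Fintype V]
    (parent : V → Option V) (rank : V → ℕ)
    (hacyc : ∀ v, ¬ Relation.TransGen (fun a b => parent a = some b) v v)
    (h2 : ∀ v, 2 ≤ rank v → ∃ a b, a ≠ b ∧ parent a = some v ∧ parent b = some v ∧
      rank a = rank v - 1 ∧ rank b = rank v - 2)
    (h1 : ∀ v, rank v = 1 → ∃ a, parent a = some v ∧ rank a = 0) :
    ∀ v : V, Nat.fib (rank v + 3) - 1 ≤
      {w : V | Relation.ReflTransGen (fun a b => parent a = some b) w v}.ncard := by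
  set R : V → V → Prop := fun a b => parent a = some b with hR
  -- determinism of the parent function
  have hdet : ∀ a b c, R a b → R a c → b = c := by
    intro a b c h1' h2'
    simp only [hR] at h1' h2'
    rw [h1'] at h2'
    exact Option.some.inj h2'
  -- comparability of common ancestors
  have hcomp : ∀ w a b, Relation.ReflTransGen R w a → Relation.ReflTransGen R w b →
      Relation.ReflTransGen R a b ∨ Relation.ReflTransGen R b a := by
    intro w a b hwa
    induction hwa using Relation.ReflTransGen.head_induction_on with
    | refl => intro h; exact Or.inl h
    | head hstep htail ih =>
      rename_i w' c _
      intro hwb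
      rcases (Relation.ReflTransGen.cases_head hwb) with heq | ⟨d, hd, hdb⟩
      · subst heq
        exact Or.inr (Relation.ReflTransGen.head hstep htail)
      · rw [hdet _ _ _ hd hstep] at hdb
        exact ih hdb
  -- descendants of distinct children are disjoint
  have hdisj : ∀ v a b, a ≠ b → R a v → R b v →
      Disjoint {w | Relation.ReflTransGen R w a} {w | Relation.ReflTransGen R w b} := by
    intro v a b hab hav hbv
    rw [Set.disjoint_left]
    intro w hwa hwb
    simp only [Set.mem_setOf_eq] at hwa hwb
    rcases hcomp w a b hwa hwb with h | h
    all_goals {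
      first
      | (rcases Relation.ReflTransGen.cases_head h with heq | ⟨c, hc, hcb⟩
         · exact hab heq
         · rw [hdet _ _ _ hc hav] at hcb
           exact hacyc v (Relation.TransGen.tail' hcb hbv))
      | (rcases Relation.ReflTransGen.cases_head h with heq | ⟨c, hc, hcb⟩
         · exact hab heq.symm
         · rw [hdet _ _ _ hc hbv] at hcb
           exact hacyc v (Relation.TransGen.tail' hcb hav)) }
  -- a node is not a descendant of its child
  have hnotmem : ∀ v a, R a v → v ∉ {w | Relation.ReflTransGen R w a} := by
    intro v a hav hv
    exact hacyc v (Relation.TransGen.tail' hv hav)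
  -- descendants of a child are descendants of the parent
  have hsub : ∀ v a, R a v →
      {w | Relation.ReflTransGen R w a} ⊆ {w | Relation.ReflTransGen R w v} := by
    intro v a hav w hw
    exact Relation.ReflTransGen.tail hw hav
  have key : ∀ n : ℕ, ∀ v : V, rank v = n →
      Nat.fib (n + 3) - 1 ≤ {w : V | Relation.ReflTransGen R w v}.ncard := by
    intro n
    induction n using Nat.strong_induction_on with
    | _ n ih =>
      intro v hv
      match n, hv with
      | 0, hv =>
        have h1le : 1 ≤ {w : V | Relation.ReflTransGen R w v}.ncard := by
          rw [Nat.one_le_iff_ne_zero, ← Nat.pos_iff_ne_zero]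
          exact (Set.ncard_pos (Set.toFinite _)).2 ⟨v, Relation.ReflTransGen.refl⟩
        have : Nat.fib (0 + 3) = 2 := by decide
        omega
      | 1, hv =>
        obtain ⟨a, hav, _⟩ := h1 v hv
        have hne : a ≠ v := by
          intro h; subst h; exact hacyc a (Relation.TransGen.single hav)
        have hsub' : ({a, v} : Set V) ⊆ {w | Relation.ReflTransGen R w v} := by
          intro w hw
          rcases hw with h | h
          · subst h; exact Relation.ReflTransGen.single hav
          · subst h; exact Relation.ReflTransGen.refl
        have := Set.ncard_le_ncard hsub' (Set.toFinite _)
        rw [Set.ncard_pair hne] at this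
        have h4 : Nat.fib (1 + 3) = 3 := by decide
        omega
      | (m + 2), hv =>
        obtain ⟨a, b, hab, hav, hbv, hra, hrb⟩ := h2 v (by omega)
        have hra' : rank a = m + 1 := by omega
        have hrb' : rank b = m := by omega
        have iha := ih (m + 1) (by omega) a hra'
        have ihb := ih m (by omega) b hrb'
        set Da := {w | Relation.ReflTransGen R w a} with hDa
        set Db := {w | Relation.ReflTransGen R w b} with hDb
        set Dv := {w | Relation.ReflTransGen R w v} with hDv
        have hsubv : insert v (Da ∪ Db) ⊆ Dv := by
          intro w hw
          rcases hw with h | h | h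
          · subst h; exact Relation.ReflTransGen.refl
          · exact hsub v a hav h
          · exact hsub v b hbv h
        have hvnot : v ∉ Da ∪ Db := by
          intro h
          rcases h with h | h
          · exact hnotmem v a hav h
          · exact hnotmem v b hbv h
        have hcard1 : (insert v (Da ∪ Db)).ncard = 1 + (Da ∪ Db).ncard := by
          rw [Set.ncard_insert_of_notMem hvnot (Set.toFinite _)]
          omega
        have hcard2 : (Da ∪ Db).ncard = Da.ncard + Db.ncard :=
          Set.ncard_union_eq (hdisj v a b hab hav hbv) (Set.toFinite _) (Set.toFinite _)
        have hle : (insert v (Da ∪ Db)).ncard ≤ Dv.ncard :=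
          Set.ncard_le_ncard hsubv (Set.toFinite _)
        have hfib : Nat.fib (m + 2 + 3) = Nat.fib (m + 1 + 3) + Nat.fib (m + 3) := by
          rw [show m + 2 + 3 = (m + 3) + 2 by ring, Nat.fib_add_two]
          ring_nf
        have hpos1 : 0 < Nat.fib (m + 1 + 3) := Nat.fib_pos.2 (by omega)
        have hpos2 : 0 < Nat.fib (m + 3) := Nat.fib_pos.2 (by omega)
        omega
  intro v
  exact key (rank v) v rfl
end

section
/- Let f : ℕ → ℕ be a positive non-decreasing function with f(r) ≤ r for r ≥ 1. Starting from rank k, repeatedly replacing rank r by max(r - f(r), 0) reaches 0 in at most k / f(⌊√k⌋) + √k steps (for k ≥ 1). -/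
/-- Let `f : ℕ → ℕ` be positive, non-decreasing, with `f r ≤ r` for `r ≥ 1`.
Starting from rank `k ≥ 1` and repeatedly replacing rank `r` by
`max (r - f r) 0` (natural subtraction), rank `0` is reached in at most
`k / f (⌊√k⌋) + √k` steps. -/
theorem decreasekey_steps_bound (f : ℕ → ℕ) (hpos : ∀ r, 1 ≤ f r)
    (hmono : Monotone f) (hle : ∀ r, 1 ≤ r → f r ≤ r) (k : ℕ) (hk : 1 ≤ k) :
    ∃ m : ℕ, (fun r => r - f r)^[m] k = 0 ∧
      (m : ℝ) ≤ (k : ℝ) / (f (Nat.sqrt k) : ℝ) + Real.sqrt k := by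
  set g : ℕ → ℕ := fun r => r - f r with hg
  have hstep : ∀ n, 1 ≤ n → g n + f n = n := by
    intro n hn
    have := hle n hn
    simp only [hg]
    omega
  have L1 : ∀ n j, g^[j] n ≤ n - j := by
    intro n j
    induction j generalizing n with
    | zero => simp
    | succ j ih =>
      rw [Function.iterate_succ_apply]
      calc g^[j] (g n) ≤ g n - j := ih (g n)
        _ ≤ n - (j + 1) := by
          have := hpos n
          simp only [hg]
          omega
  set s := Nat.sqrt k with hs
  set c := f s with hc
  have hcpos : 1 ≤ c := hpos s
  have hex : ∃ j, g^[j] k ≤ s := ⟨k, by have := L1 k k; omega⟩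
  set m1 := Nat.find hex with hm1
  have hfind : g^[m1] k ≤ s := Nat.find_spec hex
  have key : ∀ j, j ≤ m1 → j * c + g^[j] k ≤ k := by
    intro j hj
    induction j with
    | zero => simp
    | succ j ih =>
      have hjlt : j < m1 := by omega
      have hgt : s < g^[j] k := by
        have := Nat.find_min hex hjlt
        omega
      have h1 : 1 ≤ g^[j] k := by omega
      have hcle : c ≤ f (g^[j] k) := hmono (le_of_lt hgt)
      have hsv := hstep (g^[j] k) h1
      have ihj := ih (by omega)
      rw [Function.iterate_succ_apply']
      calc (j + 1) * c + g (g^[j] k) = j * c + (c + g (g^[j] k)) := by ring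
        _ ≤ j * c + (f (g^[j] k) + g (g^[j] k)) := by omega
        _ = j * c + g^[j] k := by omega
        _ ≤ k := ihj
  have hm1c : m1 * c ≤ k := by
    have := key m1 le_rfl
    omega
  set v := g^[m1] k with hv
  refine ⟨v + m1, ?_, ?_⟩
  · rw [Function.iterate_add_apply, ← hv]
    have := L1 v v
    omega
  · have h1 : (m1 : ℝ) ≤ (k : ℝ) / (c : ℝ) := by
      rw [le_div_iff₀ (by exact_mod_cast hcpos)]
      exact_mod_cast hm1c
    have h2 : (v : ℝ) ≤ Real.sqrt k := by
      calc (v : ℝ) ≤ (s : ℝ) := by exact_mod_cast hfind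
        _ ≤ Real.sqrt k := Real.nat_sqrt_le_real_sqrt
    push_cast
    linarith
end
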